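/- Let γ be the standard Gaussian measure on ℝ, let β > 0, and for each integer n and each x ≥ 0 set aₙ(x) = ∫ cosh(√(2β²x)·g)ⁿ dγ(g). Then for every x with 0 < x ≤ 1, a₁(x) − a₋₁(x) − 2β²x·a₋₁(x) + 2β²x·(2a₁(x) − a₋₁(x) − a₋₃(x) − 6β²x·a₋₃(x)) > 0. -/

import Mathlib

open MeasureTheory ProbabilityTheory Real
open scoped ENNReal NNReal

lemma l_exp_taylor (t : ℝ) (ht : 0 ≤ t) :
    1 + t/2 + t^2/8 + t^3/48 + t^4/384 + t^5/3840 ≤ Real.exp (t/2) := by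
  have h := Real.sum_le_exp_of_nonneg (x := t/2) (by linarith) 6
  simp [Finset.sum_range_succ, Nat.factorial] at h
  calc 1 + t/2 + t^2/8 + t^3/48 + t^4/384 + t^5/3840
      = 1 + t/2 + (t/2)^2/2 + (t/2)^3/6 + (t/2)^4/24 + (t/2)^5/120 := by ring
    _ ≤ Real.exp (t/2) := by convert h using 1 <;> norm_num <;> ring

lemma l_pade (u : ℝ) (hu : 0 ≤ u) : (6 - 2*u)/(6 + 4*u + u^2) ≤ Real.exp (-u) := by
  have hden : (0:ℝ) < 6 + 4*u + u^2 := by nlinarith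
  rw [div_le_iff₀ hden]
  set g : ℝ → ℝ := fun v => Real.exp (-v) * (6 + 4*v + v^2) + (2*v - 6) with hg
  have hder : ∀ v : ℝ, HasDerivAt g
      (Real.exp (-v) * -1 * (6 + 4*v + v^2) + Real.exp (-v) * (4 + 2*v) + 2) v := by
    intro v
    have h1 : HasDerivAt (fun v : ℝ => -v) (-1) v := (hasDerivAt_id v).neg
    have h2 : HasDerivAt (fun v : ℝ => Real.exp (-v)) (Real.exp (-v) * -1) v := h1.exp
    have h3 : HasDerivAt (fun v : ℝ => 6 + 4*v + v^2) (4 + 2*v) v := by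
      have h := (((hasDerivAt_id v).const_mul 4).const_add 6).add (hasDerivAt_pow 2 v)
      convert h using 1 <;> norm_num <;> rfl
    have h5 : HasDerivAt (fun v : ℝ => 2*v - 6) 2 v := by
      simpa using ((hasDerivAt_id v).const_mul 2).sub_const 6
    exact (h2.mul h3).add h5
  have hmono : MonotoneOn g (Set.Ici 0) := by
    apply monotoneOn_of_deriv_nonneg (convex_Ici 0)
    · exact Continuous.continuousOn (by fun_prop)
    · intro v hv
      exact (hder v).differentiableAt.differentiableWithinAt
    · intro v hv
      rw [(hder v).deriv]
      simp only [interior_Ici, Set.mem_Ioi] at hv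
      have hq : 1 + v + v^2/2 ≤ Real.exp v := Real.quadratic_le_exp_of_nonneg hv.le
      have hev : 0 < Real.exp v := Real.exp_pos v
      rw [Real.exp_neg v]
      nlinarith [inv_pos.mpr hev, mul_inv_cancel₀ hev.ne', hq, hv.le]
  have h := hmono (Set.self_mem_Ici) (Set.mem_Ici.mpr hu) hu
  have h0 : g 0 = 0 := by simp [hg]
  rw [h0] at h
  simp only [hg] at h
  linarith [h]

lemma l_cosh_lb (y : ℝ) : 1 + y^2/2 + y^4/24 + y^6/720 ≤ Real.cosh y := by
  wlog hy : 0 ≤ y with H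
  · have h := H (-y) (by linarith)
    rw [Real.cosh_neg] at h
    nlinarith [h]
  set S : ℝ := 1 + y + y^2/2 + y^3/6 + y^4/24 + y^5/120 + y^6/720 + y^7/5040 with hSdef
  have hS : S ≤ Real.exp y := by
    have h := Real.sum_le_exp_of_nonneg hy 8
    simp [Finset.sum_range_succ, Nat.factorial] at h
    rw [hSdef]
    linarith [h]
  have hS1 : 1 ≤ S := by
    rw [hSdef]
    nlinarith [pow_nonneg hy 2, pow_nonneg hy 3, pow_nonneg hy 4,
      pow_nonneg hy 5, pow_nonneg hy 6, pow_nonneg hy 7]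
  have hS0 : 0 < S := by linarith
  have hE : 0 < Real.exp y := Real.exp_pos y
  have hE1 : 1 ≤ Real.exp y := by linarith
  have hcosh : Real.cosh y = (Real.exp y + (Real.exp y)⁻¹)/2 := by
    rw [Real.cosh_eq, Real.exp_neg]
  have hSi : S⁻¹ ≤ 1 := by
    rw [inv_eq_one_div]; exact div_le_one_of_le₀ hS1 hS0.le
  have hEi : (Real.exp y)⁻¹ ≤ 1 := by
    rw [inv_eq_one_div]; exact div_le_one_of_le₀ hE1 hE.le
  have hprod : S⁻¹ * (Real.exp y)⁻¹ ≤ 1 := by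
    nlinarith [inv_pos.mpr hS0, inv_pos.mpr hE]
  have hid : Real.exp y + (Real.exp y)⁻¹ - S - S⁻¹
      = (Real.exp y - S) * (1 - S⁻¹*(Real.exp y)⁻¹) := by
    field_simp
    ring
  have hmon : S + S⁻¹ ≤ Real.exp y + (Real.exp y)⁻¹ := by
    nlinarith [mul_nonneg (sub_nonneg.2 hS) (sub_nonneg.2 hprod), hid]
  have hkey : 2 * S * (1 + y^2/2 + y^4/24 + y^6/720) ≤ S^2 + 1 := by
    have hid2 : S^2 + 1 - 2*S*(1 + y^2/2 + y^4/24 + y^6/720)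
        = y^8/20160 + y^10/50400 + y^12/725760 + y^14/25401600 := by
      rw [hSdef]; ring
    linarith [hid2, pow_nonneg hy 8, pow_nonneg hy 10, pow_nonneg hy 12, pow_nonneg hy 14]
  have h5 : 1 + y^2/2 + y^4/24 + y^6/720 ≤ (S + S⁻¹)/2 := by
    rw [le_div_iff₀ (by norm_num : (0:ℝ) < 2)]
    rw [← mul_le_mul_iff_of_pos_right hS0]
    have hSS : (S + S⁻¹) * S = S^2 + 1 := by
      field_simp
    rw [hSS]
    linarith [hkey]
  rw [hcosh]
  linarith

lemma l_sqrt_bound (u : ℝ) (hu : 0 ≤ u) : 1/Real.sqrt (1+u) ≤ (4+u)/(4+3*u) := by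
  have h1 : (0:ℝ) < 1 + u := by linarith
  have h2 : (0:ℝ) < 4 + 3*u := by linarith
  have hs : 0 < Real.sqrt (1+u) := Real.sqrt_pos.mpr h1
  rw [div_le_div_iff₀ hs h2]
  have key : (4+3*u) ≤ Real.sqrt ((4+u)^2*(1+u)) := by
    rw [show (4+u)^2*(1+u) = (4+3*u)^2 + u^3 by ring]
    have := Real.sqrt_le_sqrt (show (4+3*u)^2 ≤ (4+3*u)^2 + u^3 by nlinarith [pow_nonneg hu 3])
    calc (4+3*u) = Real.sqrt ((4+3*u)^2) := (Real.sqrt_sq h2.le).symm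
      _ ≤ _ := this
  calc 1*(4+3*u) = 4+3*u := by ring
    _ ≤ Real.sqrt ((4+u)^2*(1+u)) := key
    _ = (4+u) * Real.sqrt (1+u) := by
        rw [Real.sqrt_mul (by positivity), Real.sqrt_sq (by linarith)]

set_option maxHeartbeats 2000000 in
lemma l_sech_mix (y : ℝ) : (Real.cosh y)⁻¹
    ≤ 2/9 + 2/3*Real.exp (-(y^2/2)) + 1/9*(Real.exp (-(y^2/2)))^3 := by
  set z : ℝ := y^2 with hzdef
  have hz : 0 ≤ z := sq_nonneg y
  have hcoshpos : 0 < Real.cosh y := by positivity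
  have hC : 1 + z/2 + z^2/24 + z^3/720 ≤ Real.cosh y := by
    have := l_cosh_lb y
    calc 1 + z/2 + z^2/24 + z^3/720 = 1 + y^2/2 + y^4/24 + y^6/720 := by rw [hzdef]; ring
      _ ≤ Real.cosh y := this
  have hCpos : 0 < 1 + z/2 + z^2/24 + z^3/720 := by nlinarith [pow_nonneg hz 2, pow_nonneg hz 3]
  have hD1 : (0:ℝ) < 6 + 2*z + z^2/4 := by nlinarith [sq_nonneg z]
  have hD2 : (0:ℝ) < 6 + 6*z + 9*z^2/4 := by nlinarith [sq_nonneg z]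
  -- Padé bounds for the two exponentials
  have hG1 : (6-z)/(6+2*z+z^2/4) ≤ Real.exp (-(z/2)) := by
    have h := l_pade (z/2) (by linarith)
    calc (6-z)/(6+2*z+z^2/4) = (6-2*(z/2))/(6+4*(z/2)+(z/2)^2) := by ring_nf
      _ ≤ Real.exp (-(z/2)) := h
  have hG3 : (6-3*z)/(6+6*z+9*z^2/4) ≤ (Real.exp (-(z/2)))^3 := by
    have h := l_pade (3*z/2) (by linarith)
    have he : Real.exp (-(3*z/2)) = (Real.exp (-(z/2)))^3 := by
      rw [← Real.exp_nat_mul]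
      norm_num
      ring_nf
    calc (6-3*z)/(6+6*z+9*z^2/4) = (6-2*(3*z/2))/(6+4*(3*z/2)+(3*z/2)^2) := by ring_nf
      _ ≤ Real.exp (-(3*z/2)) := h
      _ = (Real.exp (-(z/2)))^3 := he
  -- polynomial certificate
  have hkey : (6+2*z+z^2/4)*(6+6*z+9*z^2/4) ≤ (1 + z/2 + z^2/24 + z^3/720) *
      (2/9*((6+2*z+z^2/4)*(6+6*z+9*z^2/4)) + 2/3*((6-z)*(6+6*z+9*z^2/4))
        + 1/9*((6-3*z)*(6+2*z+z^2/4))) := by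
    have hcert : (1 + z/2 + z^2/24 + z^3/720) *
        (2/9*((6+2*z+z^2/4)*(6+6*z+9*z^2/4)) + 2/3*((6-z)*(6+6*z+9*z^2/4))
          + 1/9*((6-3*z)*(6+2*z+z^2/4))) - (6+2*z+z^2/4)*(6+6*z+9*z^2/4)
        = (1/15)*(z^3*(z-5/8)^2) + 263/960*z^3 + 7/1440*z^6 + 1/5760*z^7 := by ring
    nlinarith [mul_nonneg (pow_nonneg hz 3) (sq_nonneg (z - 5/8)), pow_nonneg hz 3,
      pow_nonneg hz 6, pow_nonneg hz 7, hcert]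
  -- assemble: 1/cosh ≤ 1/C ≤ mixture-with-Padé ≤ mixture
  have step1 : (Real.cosh y)⁻¹ ≤ (1 + z/2 + z^2/24 + z^3/720)⁻¹ :=
    inv_anti₀ hCpos hC
  have step2 : (1 + z/2 + z^2/24 + z^3/720)⁻¹
      ≤ 2/9 + 2/3*((6-z)/(6+2*z+z^2/4)) + 1/9*((6-3*z)/(6+6*z+9*z^2/4)) := by
    rw [inv_le_iff_one_le_mul₀ hCpos]
    have expand : 2/9 + 2/3*((6-z)/(6+2*z+z^2/4)) + 1/9*((6-3*z)/(6+6*z+9*z^2/4))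
        = (2/9*((6+2*z+z^2/4)*(6+6*z+9*z^2/4)) + 2/3*((6-z)*(6+6*z+9*z^2/4))
          + 1/9*((6-3*z)*(6+2*z+z^2/4))) / ((6+2*z+z^2/4)*(6+6*z+9*z^2/4)) := by
      field_simp
    rw [expand, div_mul_eq_mul_div, le_div_iff₀ (by positivity)]
    nlinarith [hkey]
  have step3 : 2/9 + 2/3*((6-z)/(6+2*z+z^2/4)) + 1/9*((6-3*z)/(6+6*z+9*z^2/4))
      ≤ 2/9 + 2/3*Real.exp (-(z/2)) + 1/9*(Real.exp (-(z/2)))^3 := by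
    have a1 := mul_le_mul_of_nonneg_left hG1 (by norm_num : (0:ℝ) ≤ 2/3)
    have a2 := mul_le_mul_of_nonneg_left hG3 (by norm_num : (0:ℝ) ≤ 1/9)
    linarith
  have : -(z/2) = -(y^2/2) := by rw [hzdef]
  rw [this] at step3
  linarith

lemma l_transfer (f : ℝ → ℝ) :
    ∫ x, f x ∂(gaussianReal 0 1) = ∫ x, gaussianPDFReal 0 1 x * f x := by
  rw [gaussianReal_of_var_ne_zero 0 one_ne_zero]
  have h : gaussianPDF 0 1 = fun x => ((gaussianPDFReal 0 1 x).toNNReal : ℝ≥0∞) := rfl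
  rw [h, integral_withDensity_eq_integral_smul ((measurable_gaussianPDFReal 0 1).real_toNNReal)]
  congr 1
  ext x
  simp [NNReal.smul_def, Real.coe_toNNReal _ (gaussianPDFReal_nonneg 0 1 x)]

lemma l_pdf_eq (x : ℝ) : gaussianPDFReal 0 1 x = (Real.sqrt (2*π))⁻¹ * Real.exp (-(x^2/2)) := by
  simp [gaussianPDFReal]
  norm_num
  left
  ring

lemma l_int_gauss_sq (a : ℝ) (ha : 0 ≤ a) :
    ∫ x, Real.exp (-(a*x^2)) ∂(gaussianReal 0 1) = 1/Real.sqrt (1+2*a) := by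
  rw [l_transfer]
  have h1 : ∀ x : ℝ, gaussianPDFReal 0 1 x * Real.exp (-(a*x^2))
      = (Real.sqrt (2*π))⁻¹ * Real.exp (-(a+1/2)*x^2) := by
    intro x
    rw [l_pdf_eq, mul_assoc, ← Real.exp_add]
    congr 2
    ring
  simp_rw [h1]
  rw [integral_const_mul, integral_gaussian]
  have hpos : (0:ℝ) < a + 1/2 := by linarith
  have h2π : (0:ℝ) < 2*π := by positivity
  rw [Real.sqrt_div Real.pi_pos.le]
  rw [show Real.sqrt (2*π) = Real.sqrt 2 * Real.sqrt π from Real.sqrt_mul (by norm_num) _]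
  rw [show (1:ℝ)+2*a = 2*(a+1/2) by ring,
    show Real.sqrt (2*(a+1/2)) = Real.sqrt 2 * Real.sqrt (a+1/2) from
      Real.sqrt_mul (by norm_num) _]
  have hsπ : 0 < Real.sqrt π := Real.sqrt_pos.mpr Real.pi_pos
  have hs2 : 0 < Real.sqrt 2 := by positivity
  have hsa : 0 < Real.sqrt (a+1/2) := Real.sqrt_pos.mpr hpos
  field_simp

lemma l_int_cosh (c : ℝ) :
    ∫ x, Real.cosh (c*x) ∂(gaussianReal 0 1) = Real.exp (c^2/2) := by
  rw [l_transfer]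
  have h1 : ∀ x : ℝ, gaussianPDFReal 0 1 x * Real.cosh (c*x)
      = ((Real.sqrt (2*π))⁻¹ * Real.exp (c^2/2) / 2) *
        (Real.exp (-((x-c)^2/2)) + Real.exp (-((x+c)^2/2))) := by
    intro x
    rw [l_pdf_eq, Real.cosh_eq]
    have e1 : Real.exp (-(x^2/2)) * Real.exp (c*x)
        = Real.exp (c^2/2) * Real.exp (-((x-c)^2/2)) := by
      rw [← Real.exp_add, ← Real.exp_add]; congr 1; ring
    have e2 : Real.exp (-(x^2/2)) * Real.exp (-(c*x))
        = Real.exp (c^2/2) * Real.exp (-((x+c)^2/2)) := by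
      rw [← Real.exp_add, ← Real.exp_add]; congr 1; ring
    linear_combination ((Real.sqrt (2*π))⁻¹/2) * e1 + ((Real.sqrt (2*π))⁻¹/2) * e2
  simp_rw [h1]
  rw [integral_const_mul]
  have hint : Integrable (fun x : ℝ => Real.exp (-(x^2/2))) := by
    have := integrable_exp_neg_mul_sq (show (0:ℝ) < 1/2 by norm_num)
    simpa [neg_div, div_eq_inv_mul, mul_comm] using this
  have base : ∫ x : ℝ, Real.exp (-(x^2/2)) = Real.sqrt (2*π) := by
    have := integral_gaussian (1/2)
    rw [show π/(1/2) = 2*π by ring] at this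
    calc ∫ x : ℝ, Real.exp (-(x^2/2)) = ∫ x : ℝ, Real.exp (-(1/2)*x^2) := by
          congr 1; ext x; congr 1; ring
      _ = Real.sqrt (2*π) := this
  have shift : ∀ d : ℝ, ∫ x : ℝ, Real.exp (-((x-d)^2/2)) = Real.sqrt (2*π) := by
    intro d
    rw [show (fun x : ℝ => Real.exp (-((x-d)^2/2)))
        = fun x : ℝ => (fun y : ℝ => Real.exp (-(y^2/2))) (x - d) from rfl]
    rw [integral_sub_right_eq_self (fun y : ℝ => Real.exp (-(y^2/2))) d]
    exact base
  have shiftInt : ∀ d : ℝ, Integrable (fun x : ℝ => Real.exp (-((x-d)^2/2))) := by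
    intro d
    have := hint.comp_sub_right d
    simpa using this
  rw [integral_add (shiftInt c) (by simpa [sub_neg_eq_add] using shiftInt (-c))]
  have e1 : ∫ x : ℝ, Real.exp (-((x+c)^2/2)) = Real.sqrt (2*π) := by
    have := shift (-c)
    simpa [sub_neg_eq_add] using this
  rw [shift c, e1]
  have hs : 0 < Real.sqrt (2*π) := Real.sqrt_pos.mpr (by positivity)
  field_simp
  ring

set_option maxHeartbeats 2000000 in
lemma l_final (t : ℝ) (ht : 0 < t) :
    0 < (1+2*t)*(1 + t/2 + t^2/8 + t^3/48 + t^4/384 + t^5/3840)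
      - (1+2*t)*(2/9 + 2/3*((4+t)/(4+3*t)) + 1/9*((4+3*t)/(4+9*t)))
      - (t+3*t^2)*(8/729 + 8/81*((4+t)/(4+3*t)) + 8/27*((4+2*t)/(4+6*t))
        + 76/243*((4+3*t)/(4+9*t)) + 8/81*((4+4*t)/(4+12*t)) + 4/27*((4+5*t)/(4+15*t))
        + 2/243*((4+6*t)/(4+18*t)) + 2/81*((4+7*t)/(4+21*t)) + 1/729*((4+9*t)/(4+27*t))) := by
  have d1 : (0:ℝ) < 4+3*t := by linarith
  have d2 : (0:ℝ) < 4+6*t := by linarith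
  have d3 : (0:ℝ) < 4+9*t := by linarith
  have d4 : (0:ℝ) < 4+12*t := by linarith
  have d5 : (0:ℝ) < 4+15*t := by linarith
  have d6 : (0:ℝ) < 4+18*t := by linarith
  have d7 : (0:ℝ) < 4+21*t := by linarith
  have d9 : (0:ℝ) < 4+27*t := by linarith
  have key : (1+2*t)*(1 + t/2 + t^2/8 + t^3/48 + t^4/384 + t^5/3840)
      - (1+2*t)*(2/9 + 2/3*((4+t)/(4+3*t)) + 1/9*((4+3*t)/(4+9*t)))
      - (t+3*t^2)*(8/729 + 8/81*((4+t)/(4+3*t)) + 8/27*((4+2*t)/(4+6*t))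
        + 76/243*((4+3*t)/(4+9*t)) + 8/81*((4+4*t)/(4+12*t)) + 4/27*((4+5*t)/(4+15*t))
        + 2/243*((4+6*t)/(4+18*t)) + 2/81*((4+7*t)/(4+21*t)) + 1/729*((4+9*t)/(4+27*t)))
      = (t^3 * ((6717440:ℝ)/240 + 200744960/240*t + 2442110976/240*t^2
          + 15674018816/240*t^3 + 57482669184/240*t^4 + 122045168736/240*t^5
          + 146225828232/240*t^6 + 94944341484/240*t^7 + 32898006306/240*t^8
          + 4761704799/240*t^9 + 524729097/240*t^10 + 37200870/240*t^11))
        / ((4+3*t)*(4+6*t)*(4+9*t)*(4+12*t)*(4+15*t)*(4+18*t)*(4+21*t)*(4+27*t)) := by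
    field_simp
    ring
  rw [key]
  apply div_pos
  · apply mul_pos (pow_pos ht 3)
    have h0 := ht.le
    nlinarith [pow_nonneg h0 2, pow_nonneg h0 3, pow_nonneg h0 4, pow_nonneg h0 5,
      pow_nonneg h0 6, pow_nonneg h0 7, pow_nonneg h0 8, pow_nonneg h0 9,
      pow_nonneg h0 10, pow_nonneg h0 11]
  · positivity

/-- `a β n x = ∫ cosh(√(2β²x)·g)ⁿ dγ(g)` where `γ` is the standard Gaussian measure. -/
noncomputable def gaussA (β : ℝ) (n : ℤ) (x : ℝ) : ℝ :=
  ∫ g, (Real.cosh (Real.sqrt (2 * β ^ 2 * x) * g)) ^ n ∂(gaussianReal 0 1)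

set_option maxHeartbeats 1000000 in
theorem stmt_14 (β : ℝ) (hβ : 0 < β) (x : ℝ) (hx0 : 0 < x) (hx1 : x ≤ 1) :
    gaussA β 1 x - gaussA β (-1) x - 2 * β ^ 2 * x * gaussA β (-1) x
      + 2 * β ^ 2 * x *
        (2 * gaussA β 1 x - gaussA β (-1) x - gaussA β (-3) x
          - 6 * β ^ 2 * x * gaussA β (-3) x) > 0 := by
  have ht : 0 < 2 * β ^ 2 * x := by positivity
  set t : ℝ := 2 * β ^ 2 * x with htdef
  set c : ℝ := Real.sqrt t with hcdef
  have hc2 : c^2 = t := Real.sq_sqrt ht.le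
  set Q : ℝ → ℝ := fun g => Real.exp (-(c^2/2)*g^2) with hQdef
  have hQpos : ∀ g, 0 < Q g := fun g => Real.exp_pos _
  have hQle1 : ∀ g, Q g ≤ 1 := by
    intro g
    apply Real.exp_le_one_iff.mpr
    have : 0 ≤ c^2/2*g^2 := by positivity
    nlinarith
  have hQcont : Continuous Q := by
    rw [hQdef]; fun_prop
  have hQkint : ∀ k : ℕ, Integrable (fun g => Q g ^ k) (gaussianReal 0 1) := by
    intro k
    apply Integrable.mono' (integrable_const (1:ℝ))
      ((hQcont.pow k).aestronglyMeasurable)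
    filter_upwards with g
    rw [Real.norm_eq_abs, abs_of_nonneg (show 0 ≤ (Q ^ k) g from pow_nonneg (hQpos g).le k)]
    exact pow_le_one₀ (hQpos g).le (hQle1 g)
  have hQint : Integrable Q (gaussianReal 0 1) := by
    have := hQkint 1
    simpa using this
  have hQkval : ∀ k : ℕ, (∫ g, Q g ^ k ∂(gaussianReal 0 1)) = 1/Real.sqrt (1+(k:ℝ)*t) := by
    intro k
    have harg : ∀ g : ℝ, Q g ^ k = Real.exp (-(((k:ℝ)*c^2/2)*g^2)) := by
      intro g
      rw [hQdef]
      rw [← Real.exp_nat_mul]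
      congr 1
      ring
    simp_rw [harg]
    rw [l_int_gauss_sq ((k:ℝ)*c^2/2) (by positivity), hc2]
    congr 2
    ring
  have hQval : (∫ g, Q g ∂(gaussianReal 0 1)) = 1/Real.sqrt (1+t) := by
    have := hQkval 1
    simpa using this
  have hcosh1 : ∀ g : ℝ, 1 ≤ Real.cosh (c*g) := fun g => Real.one_le_cosh _
  have hsechint : Integrable (fun g => (Real.cosh (c*g))⁻¹) (gaussianReal 0 1) := by
    apply Integrable.mono' (integrable_const (1:ℝ))
    · apply Continuous.aestronglyMeasurable
      apply Continuous.inv₀ (by fun_prop)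
      intro g
      exact ne_of_gt (lt_of_lt_of_le one_pos (hcosh1 g))
    · filter_upwards with g
      rw [Real.norm_eq_abs, abs_of_nonneg (by positivity)]
      exact inv_le_one_of_one_le₀ (hcosh1 g)
  have hsech3int : Integrable (fun g => ((Real.cosh (c*g))⁻¹)^3) (gaussianReal 0 1) := by
    apply Integrable.mono' (integrable_const (1:ℝ))
    · apply Continuous.aestronglyMeasurable
      apply Continuous.pow
      apply Continuous.inv₀ (by fun_prop)
      intro g
      exact ne_of_gt (lt_of_lt_of_le one_pos (hcosh1 g))
    · filter_upwards with g
      rw [Real.norm_eq_abs, abs_of_nonneg (by positivity)]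
      apply pow_le_one₀ (by positivity)
      exact inv_le_one_of_one_le₀ (hcosh1 g)
  have hptw1 : ∀ g : ℝ, (Real.cosh (c*g))⁻¹ ≤ 2/9 + 2/3*Q g + 1/9*(Q g)^3 := by
    intro g
    have h := l_sech_mix (c*g)
    have he : Real.exp (-((c*g)^2/2)) = Q g := by
      rw [hQdef]
      congr 1
      ring
    rw [he] at h
    exact h
  have hptw3 : ∀ g : ℝ, ((Real.cosh (c*g))⁻¹)^3
      ≤ 8/729 + 8/81*Q g + 8/27*(Q g)^2 + 76/243*(Q g)^3 + 8/81*(Q g)^4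
        + 4/27*(Q g)^5 + 2/243*(Q g)^6 + 2/81*(Q g)^7 + 1/729*(Q g)^9 := by
    intro g
    have h0 : 0 ≤ (Real.cosh (c*g))⁻¹ := by positivity
    have h := pow_le_pow_left₀ h0 (hptw1 g) 3
    have hexp : (2/9 + 2/3*Q g + 1/9*(Q g)^3)^3
        = 8/729 + 8/81*Q g + 8/27*(Q g)^2 + 76/243*(Q g)^3 + 8/81*(Q g)^4
          + 4/27*(Q g)^5 + 2/243*(Q g)^6 + 2/81*(Q g)^7 + 1/729*(Q g)^9 := by ring
    rw [hexp] at h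
    exact h
  -- gaussA values
  have hsqrtc : Real.sqrt (2*β^2*x) = c := by rw [hcdef, htdef]
  have hA1 : gaussA β 1 x = Real.exp (t/2) := by
    rw [gaussA]
    simp only [zpow_one]
    rw [hsqrtc, l_int_cosh c]
    rw [hc2]
  have hAm1eq : gaussA β (-1) x = ∫ g, (Real.cosh (c*g))⁻¹ ∂(gaussianReal 0 1) := by
    rw [gaussA]
    simp only [zpow_neg, zpow_one]
    rw [hsqrtc]
  have hAm3eq : gaussA β (-3) x
      = ∫ g, ((Real.cosh (c*g))⁻¹)^3 ∂(gaussianReal 0 1) := by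
    rw [gaussA, hsqrtc]
    congr 1
    ext g
    rw [show (-3 : ℤ) = -(3:ℕ) by norm_num, zpow_neg, zpow_natCast, inv_pow]
  -- integral bounds
  have hint23 : Integrable (fun g => 2/3*Q g) (gaussianReal 0 1) := hQint.const_mul _
  have hint19 : Integrable (fun g => 1/9*Q g^3) (gaussianReal 0 1) := (hQkint 3).const_mul _
  have hm1 : gaussA β (-1) x
      ≤ 2/9 + 2/3*(1/Real.sqrt (1+t)) + 1/9*(1/Real.sqrt (1+3*t)) := by
    rw [hAm1eq]
    have pA : Integrable (fun g => 2/9 + 2/3*Q g) (gaussianReal 0 1) :=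
      (integrable_const (2/9:ℝ)).add hint23
    have pB : Integrable (fun g => 2/9 + 2/3*Q g + 1/9*Q g^3) (gaussianReal 0 1) :=
      pA.add hint19
    have step := integral_mono hsechint pB hptw1
    rw [integral_add pA hint19,
      integral_add (integrable_const (2/9:ℝ)) hint23,
      integral_const, integral_const_mul, integral_const_mul] at step
    simp only [measure_univ, ENNReal.toReal_one, smul_eq_mul, one_mul] at step
    rw [hQval, hQkval 3] at step
    calc (∫ g, (Real.cosh (c*g))⁻¹ ∂(gaussianReal 0 1)) ≤ _ := step
      _ = 2/9 + 2/3*(1/Real.sqrt (1+t)) + 1/9*(1/Real.sqrt (1+3*t)) := by norm_num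
  have hintc : ∀ (r : ℝ) (k : ℕ), Integrable (fun g => r*Q g^k) (gaussianReal 0 1) :=
    fun r k => (hQkint k).const_mul _
  have hm3 : gaussA β (-3) x
      ≤ 8/729 + 8/81*(1/Real.sqrt (1+t)) + 8/27*(1/Real.sqrt (1+2*t))
        + 76/243*(1/Real.sqrt (1+3*t)) + 8/81*(1/Real.sqrt (1+4*t))
        + 4/27*(1/Real.sqrt (1+5*t)) + 2/243*(1/Real.sqrt (1+6*t))
        + 2/81*(1/Real.sqrt (1+7*t)) + 1/729*(1/Real.sqrt (1+9*t)) := by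
    rw [hAm3eq]
    have i1 := hintc (8/81) 1
    have i2 := hintc (8/27) 2
    have i3 := hintc (76/243) 3
    have i4 := hintc (8/81) 4
    have i5 := hintc (4/27) 5
    have i6 := hintc (2/243) 6
    have i7 := hintc (2/81) 7
    have i9 := hintc (1/729) 9
    have i1' : Integrable (fun g => 8/81*Q g) (gaussianReal 0 1) := by
      apply i1.congr
      filter_upwards with g
      simp
    have p0 := integrable_const (α := ℝ) (μ := gaussianReal 0 1) (8/729 : ℝ)
    have p1 : Integrable (fun g => 8/729 + 8/81*Q g) (gaussianReal 0 1) := p0.add i1'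
    have p2 : Integrable (fun g => 8/729 + 8/81*Q g + 8/27*Q g^2) (gaussianReal 0 1) :=
      p1.add i2
    have p3 : Integrable (fun g => 8/729 + 8/81*Q g + 8/27*Q g^2 + 76/243*Q g^3)
        (gaussianReal 0 1) := p2.add i3
    have p4 : Integrable (fun g => 8/729 + 8/81*Q g + 8/27*Q g^2 + 76/243*Q g^3
        + 8/81*Q g^4) (gaussianReal 0 1) := p3.add i4
    have p5 : Integrable (fun g => 8/729 + 8/81*Q g + 8/27*Q g^2 + 76/243*Q g^3
        + 8/81*Q g^4 + 4/27*Q g^5) (gaussianReal 0 1) := p4.add i5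
    have p6 : Integrable (fun g => 8/729 + 8/81*Q g + 8/27*Q g^2 + 76/243*Q g^3
        + 8/81*Q g^4 + 4/27*Q g^5 + 2/243*Q g^6) (gaussianReal 0 1) := p5.add i6
    have p7 : Integrable (fun g => 8/729 + 8/81*Q g + 8/27*Q g^2 + 76/243*Q g^3
        + 8/81*Q g^4 + 4/27*Q g^5 + 2/243*Q g^6 + 2/81*Q g^7) (gaussianReal 0 1) :=
      p6.add i7
    have p9 : Integrable (fun g => 8/729 + 8/81*Q g + 8/27*Q g^2 + 76/243*Q g^3
        + 8/81*Q g^4 + 4/27*Q g^5 + 2/243*Q g^6 + 2/81*Q g^7 + 1/729*Q g^9)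
        (gaussianReal 0 1) := p7.add i9
    have step := integral_mono hsech3int p9 hptw3
    rw [integral_add p7 i9, integral_add p6 i7, integral_add p5 i6, integral_add p4 i5,
      integral_add p3 i4, integral_add p2 i3, integral_add p1 i2, integral_add p0 i1',
      integral_const, integral_const_mul, integral_const_mul, integral_const_mul,
      integral_const_mul, integral_const_mul, integral_const_mul, integral_const_mul,
      integral_const_mul] at step
    simp only [measure_univ, ENNReal.toReal_one, smul_eq_mul, one_mul] at step
    rw [hQval, hQkval 2, hQkval 3, hQkval 4, hQkval 5, hQkval 6, hQkval 7, hQkval 9] at step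
    calc (∫ g, ((Real.cosh (c*g))⁻¹)^3 ∂(gaussianReal 0 1)) ≤ _ := step
      _ = _ := by norm_num
  -- sqrt bounds
  have j1 : 1/Real.sqrt (1+t) ≤ (4+t)/(4+3*t) := l_sqrt_bound t ht.le
  have j2 : 1/Real.sqrt (1+2*t) ≤ (4+2*t)/(4+6*t) := by
    have h := l_sqrt_bound (2*t) (by linarith)
    rw [show (4:ℝ)+3*(2*t) = 4+6*t by ring] at h
    exact h
  have j3 : 1/Real.sqrt (1+3*t) ≤ (4+3*t)/(4+9*t) := by
    have h := l_sqrt_bound (3*t) (by linarith)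
    rw [show (4:ℝ)+3*(3*t) = 4+9*t by ring] at h
    exact h
  have j4 : 1/Real.sqrt (1+4*t) ≤ (4+4*t)/(4+12*t) := by
    have h := l_sqrt_bound (4*t) (by linarith)
    rw [show (4:ℝ)+3*(4*t) = 4+12*t by ring] at h
    exact h
  have j5 : 1/Real.sqrt (1+5*t) ≤ (4+5*t)/(4+15*t) := by
    have h := l_sqrt_bound (5*t) (by linarith)
    rw [show (4:ℝ)+3*(5*t) = 4+15*t by ring] at h
    exact h
  have j6 : 1/Real.sqrt (1+6*t) ≤ (4+6*t)/(4+18*t) := by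
    have h := l_sqrt_bound (6*t) (by linarith)
    rw [show (4:ℝ)+3*(6*t) = 4+18*t by ring] at h
    exact h
  have j7 : 1/Real.sqrt (1+7*t) ≤ (4+7*t)/(4+21*t) := by
    have h := l_sqrt_bound (7*t) (by linarith)
    rw [show (4:ℝ)+3*(7*t) = 4+21*t by ring] at h
    exact h
  have j9 : 1/Real.sqrt (1+9*t) ≤ (4+9*t)/(4+27*t) := by
    have h := l_sqrt_bound (9*t) (by linarith)
    rw [show (4:ℝ)+3*(9*t) = 4+27*t by ring] at h
    exact h
  have hb1 : gaussA β (-1) x ≤ 2/9 + 2/3*((4+t)/(4+3*t)) + 1/9*((4+3*t)/(4+9*t)) := by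
    linarith [hm1, j1, j3]
  have hb3 : gaussA β (-3) x ≤ 8/729 + 8/81*((4+t)/(4+3*t)) + 8/27*((4+2*t)/(4+6*t))
        + 76/243*((4+3*t)/(4+9*t)) + 8/81*((4+4*t)/(4+12*t)) + 4/27*((4+5*t)/(4+15*t))
        + 2/243*((4+6*t)/(4+18*t)) + 2/81*((4+7*t)/(4+21*t)) + 1/729*((4+9*t)/(4+27*t)) := by
    linarith [hm3, j1, j2, j3, j4, j5, j6, j7, j9]
  -- final combination
  have h6 : 6*β^2*x = 3*t := by rw [htdef]; ring
  rw [gt_iff_lt, h6]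
  have hcoef1 : (0:ℝ) ≤ 1+2*t := by linarith
  have hcoef3 : (0:ℝ) ≤ t+3*t^2 := by nlinarith
  have hE := l_exp_taylor t ht.le
  have hF := l_final t ht
  have hprodE := mul_le_mul_of_nonneg_left hE hcoef1
  have hprod1 := mul_le_mul_of_nonneg_left hb1 hcoef1
  have hprod3 := mul_le_mul_of_nonneg_left hb3 hcoef3
  rw [hA1] at *
  nlinarith [hprodE, hprod1, hprod3, hF]
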